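/- Let (T,σ) be the least resolved tree of a 2-BMG (G,σ), with root ρ. Then the set of support leaves S_ρ of the root equals the support set S of (G,σ). In particular, S ≠ ∅ if and only if (G,σ) is connected. -/

import Mathlib

/-- A (finite) rooted tree on vertex type `V`, encoded by its ancestor relation:
`anc u v` means that `u` is an ancestor of `v`, i.e. `u` lies on the path from
the root to `v` (in particular the relation is reflexive, `v ⪯_T u ↔ anc u v`). -/
structure RTree (V : Type) where
  anc : V → V → Prop
  refl : ∀ v, anc v v
  antisymm : ∀ u v, anc u v → anc v u → u = v
  trans : ∀ u v w, anc u v → anc v w → anc u w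
  root : V
  root_anc : ∀ v, anc root v
  chain : ∀ u v w, anc u w → anc v w → anc u v ∨ anc v u

namespace RTree

variable {V C : Type}

/-- a leaf: a vertex without proper descendants. -/
def IsLeaf (T : RTree V) (v : V) : Prop := ∀ w, T.anc v w → w = v

/-- `v` is a child of `u`: `v ≺_T u` with no vertex strictly in between. -/
def IsChild (T : RTree V) (v u : V) : Prop :=
  T.anc u v ∧ u ≠ v ∧ ∀ w, T.anc u w → T.anc w v → w = u ∨ w = v

/-- phylogenetic: every inner vertex has at least two children. -/
def Phylo (T : RTree V) : Prop :=
  ∀ u, ¬ T.IsLeaf u → ∃ v w, v ≠ w ∧ T.IsChild v u ∧ T.IsChild w u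

/-- the leaf set `L(T)`. -/
def leaves (T : RTree V) : Set V := {x | T.IsLeaf x}

/-- `y` is a best match of `x` in the leaf-colored tree `(T,σ)`:
both are leaves, `σ x ≠ σ y`, and for every leaf `y'` of the color `σ y` we have
`lca(x,y) ⪯_T lca(x,y')`, i.e. every common ancestor of `x` and `y'` is an
ancestor of `y`.  These are exactly the arcs of the best match graph `G(T,σ)`,
whose vertex set is the leaf set of `T`. -/
def BestMatch (T : RTree V) (σ : V → C) (x y : V) : Prop :=
  T.IsLeaf x ∧ T.IsLeaf y ∧ σ x ≠ σ y ∧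
    ∀ y', T.IsLeaf y' → σ y' = σ y →
      ∀ u, T.anc u x → T.anc u y' → T.anc u y

/-- the subtree `T(v)` of `T` rooted at `v`. -/
def subtree (T : RTree V) (v : V) : RTree {w : V // T.anc v w} where
  anc a b := T.anc a.1 b.1
  refl a := T.refl a.1
  antisymm a b h1 h2 := Subtype.ext (T.antisymm _ _ h1 h2)
  trans a b c h1 h2 := T.trans _ _ _ h1 h2
  root := ⟨v, T.refl v⟩
  root_anc a := a.2
  chain a b c h1 h2 := T.chain _ _ _ h1 h2

/-- contraction of the tree edge between the non-root vertex `v` and its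
parent: the vertex `v` is identified with its parent, i.e. deleted. -/
def contract (T : RTree V) (v : V) (hv : v ≠ T.root) : RTree {w : V // w ≠ v} where
  anc a b := T.anc a.1 b.1
  refl a := T.refl a.1
  antisymm a b h1 h2 := Subtype.ext (T.antisymm _ _ h1 h2)
  trans a b c h1 h2 := T.trans _ _ _ h1 h2
  root := ⟨T.root, Ne.symm hv⟩
  root_anc a := T.root_anc a.1
  chain a b c h1 h2 := T.chain _ _ _ h1 h2

/-- The edge of `T` between `v` and its parent is redundant with respect to
`G(T,σ)`: contracting it yields a tree that still explains `G(T,σ)`, i.e. the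
contracted tree has the same leaf set and induces the same best-match arcs.
(Edges of a rooted tree are identified with their lower endpoint `v`.) -/
def Redundant (T : RTree V) (σ : V → C) (v : V) : Prop :=
  ∃ hv : v ≠ T.root,
    ¬ T.IsLeaf v ∧
    (∀ w : {w : V // w ≠ v}, T.IsLeaf w.1 ↔ (T.contract v hv).IsLeaf w) ∧
    (∀ x y : {w : V // w ≠ v},
      (T.BestMatch σ x.1 y.1 ↔ (T.contract v hv).BestMatch (fun w => σ w.1) x y))

/-- `(T,σ)` is the least resolved tree (of the BMG `G(T,σ)`): a phylogenetic
tree none of whose edges is redundant. -/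
def LeastResolved (T : RTree V) (σ : V → C) : Prop :=
  T.Phylo ∧ ∀ v, ¬ T.Redundant σ v

/-- the support leaves `S_u = child_T(u) ∩ L(T)` of a vertex `u`. -/
def SupportLeaves (T : RTree V) (u : V) : Set V :=
  {v | T.IsChild v u ∧ T.IsLeaf v}

/-- the set of colors `σ(L(T(v)))` occurring on leaves of the subtree `T(v)`. -/
def subColors (T : RTree V) (σ : V → C) (v : V) : Set C :=
  σ '' {x | T.IsLeaf x ∧ T.anc v x}

/-- the set of colors `σ(L(T))` of the leaves of `T`. -/
def leafColors (T : RTree V) (σ : V → C) : Set C := σ '' T.leaves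

/-- the leaf coloring uses exactly two colors, i.e. `G(T,σ)` is a 2-BMG. -/
def TwoColored (T : RTree V) (σ : V → C) : Prop :=
  ∃ c₁ c₂ : C, c₁ ≠ c₂ ∧ T.leafColors σ = {c₁, c₂}

end RTree

/-- the digraph with arc relation `A`, restricted to the vertex set `S`, is
connected: between any two vertices of `S` there is a path inside `S` in the
underlying undirected graph. -/
def ConnectedOn {β : Type} (A : β → β → Prop) (S : Set β) : Prop :=
  S.Nonempty ∧ ∀ x ∈ S, ∀ y ∈ S,
    Relation.ReflTransGen (fun a b => a ∈ S ∧ b ∈ S ∧ (A a b ∨ A b a)) x y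

/-- `K` is a connected component of the digraph induced by the arc relation `A`
on the vertex set `S`: a maximal connected subset of `S`. -/
def IsComponent {β : Type} (A : β → β → Prop) (S : Set β) (K : Set β) : Prop :=
  K ⊆ S ∧ ConnectedOn A K ∧
    ∀ K', K ⊆ K' → K' ⊆ S → ConnectedOn A K' → K' = K

namespace RTree

/-- the best match graph `G(T,σ)` (on the leaf set of `T`) is connected. -/
def BMGConnected {V C : Type} (T : RTree V) (σ : V → C) : Prop :=
  ConnectedOn (T.BestMatch σ) T.leaves

/-- the umbrella vertices `U(G,σ)` of the BMG `G(T,σ)`: leaves having an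
out-arc to every differently colored leaf. -/
def Umbrella {V C : Type} (T : RTree V) (σ : V → C) : Set V :=
  {x | T.IsLeaf x ∧ ∀ y, T.IsLeaf y → σ y ≠ σ x → T.BestMatch σ x y}

/-- `S` is closed under in-neighbours in `G(T,σ)`: `x ∈ S → N⁻(x) ⊆ S`. -/
def InClosed {V C : Type} (T : RTree V) (σ : V → C) (S : Set V) : Prop :=
  ∀ x ∈ S, ∀ y, T.BestMatch σ y x → y ∈ S

/-- `S` is a support set of `G(T,σ)`: a maximal subset of the umbrella
vertices that is closed under in-neighbours. -/
def IsSupportSet {V C : Type} (T : RTree V) (σ : V → C) (S : Set V) : Prop :=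
  S ⊆ T.Umbrella σ ∧ T.InClosed σ S ∧
    ∀ S', S ⊆ S' → S' ⊆ T.Umbrella σ → T.InClosed σ S' → S' = S

end RTree

namespace RTree

variable {V C : Type}

open Classical in
/-- number of descendants of `w`, used as a measure. -/
noncomputable def ndeg [Fintype V] (T : RTree V) (w : V) : ℕ :=
  (Finset.univ.filter (fun z => T.anc w z)).card

open Classical in
lemma ndeg_lt [Fintype V] (T : RTree V) {m w : V} (h : T.anc m w) (hne : w ≠ m) :
    ndeg T w < ndeg T m := by
  apply Finset.card_lt_card
  rw [Finset.ssubset_iff_of_subset]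
  · refine ⟨m, ?_, ?_⟩
    · simp only [Finset.mem_filter, Finset.mem_univ, true_and]
      exact T.refl m
    · simp only [Finset.mem_filter, Finset.mem_univ, true_and]
      intro hwm
      exact hne (T.antisymm _ _ h hwm).symm
  · intro z hz
    simp only [Finset.mem_filter, Finset.mem_univ, true_and] at *
    exact T.trans _ _ _ h hz

lemma exists_min_anc [Fintype V] (T : RTree V) {A : Set V} (hA : A.Nonempty) :
    ∃ m ∈ A, ∀ w ∈ A, T.anc m w → w = m := by
  classical
  obtain ⟨a, ha⟩ := hA
  obtain ⟨m, hm, hmin⟩ := Finset.exists_min_image (Finset.univ.filter (· ∈ A)) (ndeg T)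
    ⟨a, by simp [ha]⟩
  refine ⟨m, by simpa using hm, fun w hw hanc => ?_⟩
  by_contra hne
  exact absurd (hmin w (by simp [hw])) (ndeg_lt T hanc hne).not_ge

lemma exists_max_anc [Fintype V] (T : RTree V) {A : Set V} (hA : A.Nonempty) :
    ∃ m ∈ A, ∀ w ∈ A, T.anc w m → w = m := by
  classical
  obtain ⟨a, ha⟩ := hA
  obtain ⟨m, hm, hmax⟩ := Finset.exists_max_image (Finset.univ.filter (· ∈ A)) (ndeg T)
    ⟨a, by simp [ha]⟩
  refine ⟨m, by simpa using hm, fun w hw hanc => ?_⟩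
  by_contra hne
  exact absurd (hmax w (by simp [hw])) (ndeg_lt T hanc (fun h => hne h.symm)).not_ge

lemma exists_leaf_below [Fintype V] (T : RTree V) (v : V) :
    ∃ ℓ, T.IsLeaf ℓ ∧ T.anc v ℓ := by
  obtain ⟨m, hm, hmin⟩ := exists_min_anc T (A := {w | T.anc v w}) ⟨v, T.refl v⟩
  exact ⟨m, fun w hw => hmin w (T.trans _ _ _ hm hw) hw, hm⟩

lemma eq_root_of_anc_root (T : RTree V) {v : V} (h : T.anc v T.root) : v = T.root :=
  T.antisymm _ _ h (T.root_anc v)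

lemma exists_parent [Fintype V] (T : RTree V) {v : V} (hv : v ≠ T.root) :
    ∃ p, T.IsChild v p := by
  have hA : ({w | T.anc w v ∧ w ≠ v} : Set V).Nonempty :=
    ⟨T.root, T.root_anc v, fun h => hv h.symm⟩
  obtain ⟨p, ⟨hpv, hpne⟩, hmin⟩ := exists_min_anc T hA
  have hleast : ∀ w, T.anc w v → w ≠ v → T.anc w p := by
    intro w hwv hwne
    rcases T.chain w p v hwv hpv with h | h
    · exact h
    · rw [hmin w ⟨hwv, hwne⟩ h]; exact T.refl p
  refine ⟨p, hpv, hpne, fun w hpw hwv => ?_⟩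
  by_cases hw : w = v
  · exact Or.inr hw
  · exact Or.inl (T.antisymm _ _ (hleast w hwv hw) hpw)

lemma exists_topchild [Fintype V] (T : RTree V) {v : V} (hv : v ≠ T.root) :
    ∃ a, T.IsChild a T.root ∧ T.anc a v := by
  have hA : ({w | T.anc w v ∧ w ≠ T.root} : Set V).Nonempty := ⟨v, T.refl v, hv⟩
  obtain ⟨a, ⟨hav, har⟩, hmax⟩ := exists_max_anc T hA
  have htop : ∀ w, T.anc w v → w ≠ T.root → T.anc a w := by
    intro w hwv hwr
    rcases T.chain a w v hav hwv with h | h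
    · exact h
    · rw [hmax w ⟨hwv, hwr⟩ h]; exact T.refl a
  refine ⟨a, ⟨T.root_anc a, fun h => har h.symm, fun w hrw hwa => ?_⟩, hav⟩
  by_cases hw : w = T.root
  · exact Or.inl hw
  · exact Or.inr (T.antisymm _ _ hwa (htop w (T.trans _ _ _ hwa hav) hw))

lemma root_child_eq (T : RTree V) {a b : V} (ha : T.IsChild a T.root) (hb : T.IsChild b T.root)
    (h : T.anc a b) : a = b := by
  rcases hb.2.2 a (T.root_anc a) h with h' | h'
  · exact absurd h'.symm ha.2.1
  · exact h'

lemma exists_lca [Fintype V] (T : RTree V) (σ : V → C) (x : V) {c : C}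
    (hc : ∃ y, T.IsLeaf y ∧ σ y = c) :
    ∃ u, T.anc u x ∧ (∃ y, T.IsLeaf y ∧ σ y = c ∧ T.anc u y) ∧
      ∀ w, T.anc w x → (∃ y, T.IsLeaf y ∧ σ y = c ∧ T.anc w y) → T.anc w u := by
  obtain ⟨y0, hy0, hc0⟩ := hc
  have hA : ({w | T.anc w x ∧ ∃ y, T.IsLeaf y ∧ σ y = c ∧ T.anc w y} : Set V).Nonempty :=
    ⟨T.root, T.root_anc x, y0, hy0, hc0, T.root_anc y0⟩
  obtain ⟨u, hu, hmin⟩ := exists_min_anc T hA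
  refine ⟨u, hu.1, hu.2, fun w hwx hwy => ?_⟩
  rcases T.chain w u x hwx hu.1 with h | h
  · exact h
  · rw [hmin w ⟨hwx, hwy⟩ h]; exact T.refl u

lemma bestMatch_iff (T : RTree V) (σ : V → C) {x y u : V}
    (hx : T.IsLeaf x) (hy : T.IsLeaf y) (hxy : σ x ≠ σ y)
    (hux : T.anc u x) (huy : ∃ y', T.IsLeaf y' ∧ σ y' = σ y ∧ T.anc u y')
    (hleast : ∀ w, T.anc w x → (∃ y', T.IsLeaf y' ∧ σ y' = σ y ∧ T.anc w y') → T.anc w u) :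
    T.BestMatch σ x y ↔ T.anc u y := by
  constructor
  · intro hbm
    obtain ⟨y', hy', hcy', huy'⟩ := huy
    exact hbm.2.2.2 y' hy' hcy' u hux huy'
  · intro huyanc
    exact ⟨hx, hy, hxy, fun y' hy' hcy' w hwx hwy' =>
      T.trans _ _ _ (hleast w hwx ⟨y', hy', hcy', hwy'⟩) huyanc⟩

lemma contract_leaf_iff [Fintype V] (T : RTree V) {v : V} (hv : v ≠ T.root)
    (hnl : ¬ T.IsLeaf v) :
    ∀ w : {w : V // w ≠ v}, T.IsLeaf w.1 ↔ (T.contract v hv).IsLeaf w := by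
  intro w
  constructor
  · intro h w' hw'
    exact Subtype.ext (h w'.1 hw')
  · intro h w' hw'
    by_cases hwv : w' = v
    · subst hwv
      obtain ⟨ℓ, hℓ, hvℓ⟩ := exists_leaf_below T w'
      have hℓv : ℓ ≠ w' := fun he => hnl (he ▸ hℓ)
      have hℓw : ℓ = w.1 := congrArg Subtype.val (h ⟨ℓ, hℓv⟩ (T.trans _ _ _ hw' hvℓ))
      exact ((w.2) (T.antisymm _ _ hw' (hℓw ▸ hvℓ))).elim
    · exact congrArg Subtype.val (h ⟨w', hwv⟩ hw')

lemma bm_contract [Fintype V] (T : RTree V) (σ : V → C) {v : V} (hv : v ≠ T.root)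
    (hnl : ¬ T.IsLeaf v) (x y : {w : V // w ≠ v}) (h : T.BestMatch σ x.1 y.1) :
    (T.contract v hv).BestMatch (fun w => σ w.1) x y := by
  obtain ⟨hx, hy, hxy, hcond⟩ := h
  refine ⟨(contract_leaf_iff T hv hnl x).mp hx, (contract_leaf_iff T hv hnl y).mp hy, hxy, ?_⟩
  intro y' hy' hcy' u hux huy'
  exact hcond y'.1 ((contract_leaf_iff T hv hnl y').mpr hy') hcy' u.1 hux huy'

lemma redundant_of_mono [Fintype V] (T : RTree V) (σ : V → C) {v : V} {c : C}
    (hv : v ≠ T.root) (hnl : ¬ T.IsLeaf v)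
    (hmono : ∀ y, T.IsLeaf y → T.anc v y → σ y = c) :
    T.Redundant σ v := by
  refine ⟨hv, hnl, contract_leaf_iff T hv hnl, fun x y => ?_⟩
  constructor
  · exact bm_contract T σ hv hnl x y
  · rintro ⟨hx, hy, hxy, hcond⟩
    have hxl : T.IsLeaf x.1 := (contract_leaf_iff T hv hnl x).mpr hx
    have hyl : T.IsLeaf y.1 := (contract_leaf_iff T hv hnl y).mpr hy
    refine ⟨hxl, hyl, hxy, ?_⟩
    intro y' hy' hcy' u hux huy'
    by_cases huv : u = v
    · subst huv
      have hcx : σ x.1 = σ y.1 :=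
        ((hmono x.1 hxl hux).trans (hmono y' hy' huy').symm).trans hcy'
      exact (hxy hcx).elim
    · have hy'v : y' ≠ v := fun he => hnl (he ▸ hy')
      exact hcond ⟨y', hy'v⟩ ((contract_leaf_iff T hv hnl ⟨y', hy'v⟩).mp hy') hcy'
        ⟨u, huv⟩ hux huy'

lemma both_colors_below [Fintype V] (T : RTree V) (σ : V → C) {c₁ c₂ : C}
    (hNR : ∀ v, ¬ T.Redundant σ v) (hcc : c₁ ≠ c₂)
    (hcol : ∀ y, T.IsLeaf y → σ y = c₁ ∨ σ y = c₂)
    {v : V} (hv : v ≠ T.root) (hnl : ¬ T.IsLeaf v) (c : C) (hc : c = c₁ ∨ c = c₂) :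
    ∃ y, T.IsLeaf y ∧ T.anc v y ∧ σ y = c := by
  by_contra h
  push_neg at h
  rcases hc with rfl | rfl
  · exact hNR v (redundant_of_mono T σ hv hnl (c := c₂) (fun y hy hvy =>
      (hcol y hy).resolve_left (h y hy hvy)))
  · exact hNR v (redundant_of_mono T σ hv hnl (c := c₁) (fun y hy hvy =>
      (hcol y hy).resolve_right (h y hy hvy)))

lemma root_not_leaf (T : RTree V) (σ : V → C) {c₁ c₂ : C} (hcc : c₁ ≠ c₂)
    (h1 : ∃ y, T.IsLeaf y ∧ σ y = c₁) (h2 : ∃ y, T.IsLeaf y ∧ σ y = c₂) :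
    ¬ T.IsLeaf T.root := by
  rintro h
  obtain ⟨y1, hy1, hc1⟩ := h1
  obtain ⟨y2, hy2, hc2⟩ := h2
  have e1 : y1 = T.root := h y1 (T.root_anc y1)
  have e2 : y2 = T.root := h y2 (T.root_anc y2)
  exact hcc ((e1 ▸ hc1).symm.trans (e2 ▸ hc2))

lemma support_sub_umbrella (T : RTree V) (σ : V → C) :
    T.SupportLeaves T.root ⊆ T.Umbrella σ := by
  rintro x ⟨hch, hxl⟩
  refine ⟨hxl, fun y hy hσ => ⟨hxl, hy, fun h => hσ h.symm, ?_⟩⟩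
  intro y' hy' hcy' u hux huy'
  rcases hch.2.2 u (T.root_anc u) hux with h | h
  · rw [h]; exact T.root_anc y
  · subst h
    have hyx : y' = u := hxl y' huy'
    exact (hσ ((hyx ▸ hcy').symm)).elim

lemma inclosed_support [Fintype V] (T : RTree V) (σ : V → C) {c₁ c₂ : C}
    (hNR : ∀ v, ¬ T.Redundant σ v) (hcc : c₁ ≠ c₂)
    (hcol : ∀ y, T.IsLeaf y → σ y = c₁ ∨ σ y = c₂)
    (hrnl : ¬ T.IsLeaf T.root) :
    T.InClosed σ (T.SupportLeaves T.root) := by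
  rintro x ⟨hch, hxl⟩ y hbm
  obtain ⟨hyl, hxl', hσ, hcond⟩ := hbm
  have hyr : y ≠ T.root := fun he => hrnl (he ▸ hyl)
  obtain ⟨p, hp⟩ := exists_parent T hyr
  by_cases hpr : p = T.root
  · subst hpr; exact ⟨hp, hyl⟩
  · exfalso
    have hpnl : ¬ T.IsLeaf p := fun h => hp.2.1 (h y hp.1).symm
    obtain ⟨x', hx'l, hpx', hcx'⟩ := both_colors_below T σ hNR hcc hcol hpr hpnl (σ x)
      (hcol x hxl)
    have hpx : T.anc p x := hcond x' hx'l hcx' p hp.1 hpx'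
    rcases hch.2.2 p (T.root_anc p) hpx with h | h
    · exact hpr h
    · subst h
      exact hσ (by rw [hxl y hp.1])

lemma other_color (T : RTree V) (σ : V → C) {c₁ c₂ : C} (hcc : c₁ ≠ c₂)
    (hcol : ∀ y, T.IsLeaf y → σ y = c₁ ∨ σ y = c₂)
    (hex1 : ∃ y, T.IsLeaf y ∧ σ y = c₁) (hex2 : ∃ y, T.IsLeaf y ∧ σ y = c₂)
    {z : V} (hz : T.IsLeaf z) :
    ∃ co, co ≠ σ z ∧ (∃ y, T.IsLeaf y ∧ σ y = co) ∧
      ∀ y, T.IsLeaf y → σ y = σ z ∨ σ y = co := by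
  rcases hcol z hz with h | h
  · refine ⟨c₂, by rw [h]; exact hcc.symm, hex2, fun y hy => ?_⟩
    rcases hcol y hy with h' | h'
    · exact Or.inl (by rw [h', h])
    · exact Or.inr h'
  · refine ⟨c₁, by rw [h]; exact hcc, hex1, fun y hy => ?_⟩
    rcases hcol y hy with h' | h'
    · exact Or.inr h'
    · exact Or.inl (by rw [h', h])

lemma umbrella_closed_sub_support [Fintype V] (T : RTree V) (σ : V → C) {c₁ c₂ : C}
    (hP : T.Phylo) (hNR : ∀ v, ¬ T.Redundant σ v) (hcc : c₁ ≠ c₂)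
    (hcol : ∀ y, T.IsLeaf y → σ y = c₁ ∨ σ y = c₂)
    (hex1 : ∃ y, T.IsLeaf y ∧ σ y = c₁) (hex2 : ∃ y, T.IsLeaf y ∧ σ y = c₂)
    {S' : Set V} (hU : S' ⊆ T.Umbrella σ) (hIC : T.InClosed σ S') :
    S' ⊆ T.SupportLeaves T.root := by
  intro x hxS
  obtain ⟨hxl, humb⟩ := hU hxS
  have hrnl : ¬ T.IsLeaf T.root := root_not_leaf T σ hcc hex1 hex2
  have hxr : x ≠ T.root := fun he => hrnl (he ▸ hxl)
  obtain ⟨p, hp⟩ := exists_parent T hxr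
  by_cases hpr : p = T.root
  · subst hpr; exact ⟨hp, hxl⟩
  exfalso
  obtain ⟨co, hco_ne, hexco, hcol'⟩ := other_color T σ hcc hcol hex1 hex2 hxl
  obtain ⟨u, hux, ⟨yco, hyco_l, hyco_c, huyco⟩, huleast⟩ := exists_lca T σ x hexco
  have hpnl : ¬ T.IsLeaf p := fun h => hp.2.1 (h x hp.1).symm
  have hcoc : co = c₁ ∨ co = c₂ := by
    obtain ⟨z, hz, hzc⟩ := hexco
    rw [← hzc]; exact hcol z hz
  obtain ⟨z, hzl, hpz, hzc⟩ := both_colors_below T σ hNR hcc hcol hpr hpnl co hcoc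
  have hpu : T.anc p u := huleast p hp.1 ⟨z, hzl, hzc, hpz⟩
  have hur : u ≠ T.root := fun he => hpr (eq_root_of_anc_root T (he ▸ hpu))
  have hunl : ¬ T.IsLeaf u := by
    intro h
    have h1 : x = u := h x hux
    have h2 : yco = u := h yco huyco
    have : σ yco = σ x := by rw [h2, ← h1]
    exact hco_ne (hyco_c.symm.trans this)
  have hall : ∀ y, T.IsLeaf y → σ y = co → T.anc u y := by
    intro y hyl hyc
    have hbm := humb y hyl (by rw [hyc]; exact hco_ne)
    exact hbm.2.2.2 yco hyco_l (hyco_c.trans hyc.symm) u hux huyco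
  obtain ⟨a, hach, hau⟩ := exists_topchild T hur
  obtain ⟨v1, w1, hvw, hv1, hw1⟩ := hP T.root hrnl
  obtain ⟨b, hbch, hba⟩ : ∃ b, T.IsChild b T.root ∧ b ≠ a := by
    by_cases h : v1 = a
    · exact ⟨w1, hw1, fun he => hvw (h.trans he.symm)⟩
    · exact ⟨v1, hv1, h⟩
  obtain ⟨ℓ, hℓl, hbℓ⟩ := exists_leaf_below T b
  have hℓnu : ¬ T.anc u ℓ := by
    intro h
    rcases T.chain b u ℓ hbℓ h with h' | h'
    · rcases T.chain a b u hau h' with h'' | h''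
      · exact hba (root_child_eq T hach hbch h'').symm
      · exact hba (root_child_eq T hbch hach h'')
    · exact hba (root_child_eq T hach hbch (T.trans _ _ _ hau h')).symm
  have hlc : σ ℓ = σ x := (hcol' ℓ hℓl).resolve_right (fun h => hℓnu (hall ℓ hℓl h))
  by_cases hcase : ∃ y, T.IsLeaf y ∧ σ y = co ∧ T.BestMatch σ y x
  · obtain ⟨y0, hy0l, hy0c, hbm0⟩ := hcase
    obtain ⟨_, humb0⟩ := hU (hIC x hxS y0 hbm0)
    have hbmℓ := humb0 ℓ hℓl (by rw [hlc, hy0c]; exact hco_ne.symm)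
    exact hℓnu (hbmℓ.2.2.2 x hxl hlc.symm u (hall y0 hy0l hy0c) hux)
  · push_neg at hcase
    apply hNR u
    refine ⟨hur, hunl, contract_leaf_iff T hur hunl, fun a' b' => ?_⟩
    constructor
    · exact bm_contract T σ hur hunl a' b'
    · rintro ⟨ha', hb', hab, hcond⟩
      have hal : T.IsLeaf a'.1 := (contract_leaf_iff T hur hunl a').mpr ha'
      have hbl : T.IsLeaf b'.1 := (contract_leaf_iff T hur hunl b').mpr hb'
      refine ⟨hal, hbl, hab, ?_⟩
      intro y' hy'l hcy' w hwa hwy'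
      by_cases hwu : w = u
      · rw [hwu] at hwa hwy' ⊢
        rcases hcol' b'.1 hbl with hbc | hbc
        · have hac : σ a'.1 = co :=
            (hcol' a'.1 hal).resolve_left (fun h => hab (h.trans hbc.symm))
          obtain ⟨va, hva_a, ⟨xc, hxcl, hxcc, hvaxc⟩, hvaleast⟩ :=
            exists_lca T σ a'.1 (c := σ x) ⟨x, hxl, rfl⟩
          have hvane : va ≠ u := by
            intro he
            apply hcase a'.1 hal hac
            exact (bestMatch_iff T σ hal hxl (by rw [hac]; exact hco_ne) hva_a
              ⟨xc, hxcl, hxcc, hvaxc⟩ hvaleast).mpr (by rw [he]; exact hux)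
          have huva : T.anc u va := hvaleast u hwa ⟨x, hxl, rfl, hux⟩
          have hxcu : xc ≠ u := fun he => hunl (he ▸ hxcl)
          have hvb : T.anc va b'.1 := hcond ⟨xc, hxcu⟩
            ((contract_leaf_iff T hur hunl ⟨xc, hxcu⟩).mp hxcl)
            (hxcc.trans hbc.symm) ⟨va, hvane⟩ hva_a hvaxc
          exact T.trans _ _ _ huva hvb
        · exact hall b'.1 hbl hbc
      · have hy'u : y' ≠ u := fun he => hunl (he ▸ hy'l)
        exact hcond ⟨y', hy'u⟩ ((contract_leaf_iff T hur hunl ⟨y', hy'u⟩).mp hy'l) hcy'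
          ⟨w, hwu⟩ hwa hwy'

lemma connected_of_support [Fintype V] (T : RTree V) (σ : V → C) {c₁ c₂ : C}
    (hcc : c₁ ≠ c₂) (hcol : ∀ y, T.IsLeaf y → σ y = c₁ ∨ σ y = c₂)
    (hex1 : ∃ y, T.IsLeaf y ∧ σ y = c₁) (hex2 : ∃ y, T.IsLeaf y ∧ σ y = c₂)
    {x : V} (hx : x ∈ T.SupportLeaves T.root) : T.BMGConnected σ := by
  obtain ⟨hch, hxl⟩ := hx
  have humb : x ∈ T.Umbrella σ := support_sub_umbrella T σ ⟨hch, hxl⟩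
  have hsymm : Symmetric (fun a b =>
      a ∈ T.leaves ∧ b ∈ T.leaves ∧ (T.BestMatch σ a b ∨ T.BestMatch σ b a)) :=
    fun a b h => ⟨h.2.1, h.1, h.2.2.symm⟩
  have hreach : ∀ z, T.IsLeaf z → Relation.ReflTransGen (fun a b =>
      a ∈ T.leaves ∧ b ∈ T.leaves ∧ (T.BestMatch σ a b ∨ T.BestMatch σ b a)) z x := by
    intro z hzl
    by_cases hσ : σ z = σ x
    · obtain ⟨co, hcone, hexco, _⟩ := other_color T σ hcc hcol hex1 hex2 hzl
      obtain ⟨u, huz, ⟨y, hyl, hyc, huy⟩, huleast⟩ := exists_lca T σ z hexco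
      have hbm : T.BestMatch σ z y := ⟨hzl, hyl, by rw [hyc]; exact hcone.symm,
        fun y' hy' hcy' w hwz hwy' =>
          T.trans _ _ _ (huleast w hwz ⟨y', hy', hcy'.trans hyc, hwy'⟩) huy⟩
      have hbmx : T.BestMatch σ x y := humb.2 y hyl (by rw [hyc, ← hσ]; exact hcone)
      exact Relation.ReflTransGen.tail
        (Relation.ReflTransGen.single ⟨hzl, hyl, Or.inl hbm⟩) ⟨hyl, hxl, Or.inr hbmx⟩
    · exact Relation.ReflTransGen.single ⟨hzl, hxl, Or.inr (humb.2 z hzl hσ)⟩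
  refine ⟨⟨x, hxl⟩, fun z₁ h₁ z₂ h₂ => ?_⟩
  exact (hreach z₁ h₁).trans ((@Relation.ReflTransGen.symmetric _ _ ⟨fun a b h => hsymm h⟩).symm _ _ (hreach z₂ h₂))

lemma support_of_connected [Fintype V] (T : RTree V) (σ : V → C) {c₁ c₂ : C}
    (hP : T.Phylo) (hNR : ∀ v, ¬ T.Redundant σ v) (hcc : c₁ ≠ c₂)
    (hcol : ∀ y, T.IsLeaf y → σ y = c₁ ∨ σ y = c₂)
    (hex1 : ∃ y, T.IsLeaf y ∧ σ y = c₁) (hex2 : ∃ y, T.IsLeaf y ∧ σ y = c₂)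
    (hconn : T.BMGConnected σ) : (T.SupportLeaves T.root).Nonempty := by
  by_contra hemp
  have hSL : ∀ d, T.IsChild d T.root → ¬ T.IsLeaf d := fun d hd hdl => hemp ⟨d, hd, hdl⟩
  have hrnl : ¬ T.IsLeaf T.root := root_not_leaf T σ hcc hex1 hex2
  obtain ⟨v1, w1, hvw, hv1, hw1⟩ := hP T.root hrnl
  obtain ⟨la, hla, hva⟩ := exists_leaf_below T v1
  obtain ⟨lb, hlb, hwb⟩ := exists_leaf_below T w1
  have harc : ∀ p q d, T.BestMatch σ p q → T.IsChild d T.root → T.anc d p → T.anc d q := by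
    intro p q d hbm hd hdp
    have hdnl := hSL d hd
    have hdr : d ≠ T.root := fun h => hd.2.1 h.symm
    obtain ⟨y', hy'l, hdy', hy'c⟩ := both_colors_below T σ hNR hcc hcol hdr hdnl (σ q)
      (hcol q hbm.2.1)
    exact hbm.2.2.2 y' hy'l hy'c d hdp hdy'
  have hinv : ∀ z, Relation.ReflTransGen (fun a b =>
      a ∈ T.leaves ∧ b ∈ T.leaves ∧ (T.BestMatch σ a b ∨ T.BestMatch σ b a)) la z →
      T.anc v1 z := by
    intro z0 hz0
    induction hz0 with
    | refl => exact hva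
    | @tail m z hm hstep ih =>
      obtain ⟨hmL, hzL, hor⟩ := hstep
      rcases hor with hbm | hbm
      · exact harc _ _ _ hbm hv1 ih
      · have hzr : z ≠ T.root := fun h => hrnl (h ▸ hzL)
        obtain ⟨e, he, hed⟩ := exists_topchild T hzr
        have hec : T.anc e m := harc _ _ _ hbm he hed
        have hve : v1 = e := by
          rcases T.chain v1 e m ih hec with h | h
          · exact root_child_eq T hv1 he h
          · exact (root_child_eq T he hv1 h).symm
        rw [hve]; exact hed
  rcases T.chain v1 w1 lb (hinv lb (hconn.2 la hla lb hlb)) hwb with h | h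
  · exact hvw (root_child_eq T hv1 hw1 h)
  · exact hvw (root_child_eq T hw1 hv1 h).symm

end RTree

/-- Let `(T,σ)` be the least resolved tree of a 2-BMG
`(G,σ)` with root `ρ`.  Then the support leaves `S_ρ` of the root are exactly
the support set `S` of `(G,σ)`; in particular `S ≠ ∅` iff `(G,σ)` is
connected. -/
theorem support_leaves_are_support_set {V C : Type} [Fintype V]
    (T : RTree V) (σ : V → C) (hLRT : T.LeastResolved σ)
    (h2 : T.TwoColored σ) :
    T.IsSupportSet σ (T.SupportLeaves T.root) ∧
      ((T.SupportLeaves T.root).Nonempty ↔ T.BMGConnected σ) := by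
  obtain ⟨hP, hNR⟩ := hLRT
  obtain ⟨c₁, c₂, hcc, hLC⟩ := h2
  have hcol : ∀ y, T.IsLeaf y → σ y = c₁ ∨ σ y = c₂ := by
    intro y hy
    have : σ y ∈ ({c₁, c₂} : Set C) := by
      rw [← hLC]; exact ⟨y, hy, rfl⟩
    simpa using this
  have hex1 : ∃ y, T.IsLeaf y ∧ σ y = c₁ := by
    have : c₁ ∈ T.leafColors σ := by rw [hLC]; exact Or.inl rfl
    obtain ⟨y, hy, hc⟩ := this
    exact ⟨y, hy, hc⟩
  have hex2 : ∃ y, T.IsLeaf y ∧ σ y = c₂ := by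
    have : c₂ ∈ T.leafColors σ := by rw [hLC]; exact Or.inr rfl
    obtain ⟨y, hy, hc⟩ := this
    exact ⟨y, hy, hc⟩
  refine ⟨⟨RTree.support_sub_umbrella T σ,
    RTree.inclosed_support T σ hNR hcc hcol (RTree.root_not_leaf T σ hcc hex1 hex2),
    fun S' hsub hU hIC => Set.Subset.antisymm
      (RTree.umbrella_closed_sub_support T σ hP hNR hcc hcol hex1 hex2 hU hIC) hsub⟩,
    ⟨fun h => RTree.connected_of_support T σ hcc hcol hex1 hex2 h.choose_spec,
     fun hconn => RTree.support_of_connected T σ hP hNR hcc hcol hex1 hex2 hconn⟩⟩
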